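/- Let C be a (k,r,h) local maximally recoverable code with local group supports S_1, ..., S_{(k+h)/r}. Then for any subset I of {1,...,n}, the columns of a generator matrix of C indexed by I are linearly independent (i.e., ρ(I) = |I|) if and only if |I| ≤ k and |I ∩ S_i| ≤ r for all 1 ≤ i ≤ (k+h)/r. -/
import Mathlib


open Finset

/-- Coordinate index set of a `(k,r,h)` local code with `ℓ = (k+h)/r` local groups:
`Sum.inl t` for `t : Fin (k+h)` are the message symbols (`t < k`) and global parities
(`k ≤ t < k+h`), and `Sum.inr i` is the local parity of the `i`-th local group.
Its cardinality is `n = k + h + ℓ`. -/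
abbrev LIdx (k h ℓ : ℕ) : Type := Fin (k + h) ⊕ Fin ℓ

/-- The support `S_i` of the `i`-th local group: the `r` coordinates
`{ir, ir+1, …, (i+1)r - 1}` together with the `i`-th local parity. -/
def lGroup (k h r ℓ : ℕ) (i : Fin ℓ) : Finset (LIdx k h ℓ) :=
  insert (Sum.inr i)
    ((Finset.univ.filter fun t : Fin (k + h) =>
      (i : ℕ) * r ≤ (t : ℕ) ∧ (t : ℕ) < ((i : ℕ) + 1) * r).image Sum.inl)

/-- The `j`-th coordinate of the `i`-th local group among the first `k + h` coordinates. -/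
def lCoord (k h r ℓ : ℕ) (hkh : k + h = ℓ * r) (i : Fin ℓ) (j : Fin r) : Fin (k + h) :=
  ⟨(i : ℕ) * r + (j : ℕ), by
    have hi : (i : ℕ) + 1 ≤ ℓ := i.2
    have hj : (j : ℕ) < r := j.2
    have h1 : ((i : ℕ) + 1) * r ≤ ℓ * r := Nat.mul_le_mul_right r hi
    have h2 : ((i : ℕ) + 1) * r = (i : ℕ) * r + r := by ring
    omega⟩

/-- `ρ(U)`: the dimension of the projection of the code `C` onto the coordinates in `U`
(equivalently, the rank of the corresponding columns of a generator matrix of `C`). -/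
noncomputable def lRho (k h ℓ : ℕ) (F : Type) [Field F]
    (C : Submodule F (LIdx k h ℓ → F)) (U : Finset (LIdx k h ℓ)) : ℕ :=
  Module.finrank F (C.map (LinearMap.funLeft F F (Subtype.val : ↥U → LIdx k h ℓ)))

section Aux
variable {k h r ℓ : ℕ}

lemma mem_lGroup_inr {i j : Fin ℓ} : Sum.inr j ∈ lGroup k h r ℓ i ↔ j = i := by
  simp [lGroup]

lemma mem_lGroup_inl {i : Fin ℓ} {t : Fin (k + h)} :
    Sum.inl t ∈ lGroup k h r ℓ i ↔ (i : ℕ) * r ≤ (t : ℕ) ∧ (t : ℕ) < ((i : ℕ) + 1) * r := by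
  simp [lGroup]

lemma lCoord_mem (hkh : k + h = ℓ * r) (i : Fin ℓ) (j : Fin r) :
    Sum.inl (lCoord k h r ℓ hkh i j) ∈ lGroup k h r ℓ i := by
  rw [mem_lGroup_inl]
  have h2 : ((i : ℕ) + 1) * r = (i : ℕ) * r + r := by ring
  have := j.2
  simp only [lCoord]
  omega

lemma card_lGroup (hkh : k + h = ℓ * r) (i : Fin ℓ) : (lGroup k h r ℓ i).card = r + 1 := by
  have h2 : ((i : ℕ) + 1) * r = (i : ℕ) * r + r := by ring
  have hfil : (Finset.univ.filter fun t : Fin (k + h) =>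
      (i : ℕ) * r ≤ (t : ℕ) ∧ (t : ℕ) < ((i : ℕ) + 1) * r)
      = Finset.univ.image (lCoord k h r ℓ hkh i) := by
    ext t
    simp only [mem_filter, mem_univ, true_and, mem_image]
    constructor
    · rintro ⟨h1, h3⟩
      exact ⟨⟨(t : ℕ) - (i : ℕ) * r, by omega⟩, by ext; simp [lCoord]; omega⟩
    · rintro ⟨j, rfl⟩
      have := j.2
      simp only [lCoord]
      omega
  rw [lGroup, Finset.card_insert_of_notMem (by simp), hfil,
    Finset.card_image_of_injective _ Sum.inl_injective,
    Finset.card_image_of_injective, Finset.card_univ, Fintype.card_fin]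
  intro a b hab
  have ha := a.2; have hb := b.2
  simp only [lCoord, Fin.mk.injEq] at hab
  exact Fin.ext (by omega)

lemma lGroup_disjoint {i j : Fin ℓ} (hij : i ≠ j) :
    Disjoint (lGroup k h r ℓ i) (lGroup k h r ℓ j) := by
  rw [Finset.disjoint_left]
  rintro (t | m) hi hj
  · rw [mem_lGroup_inl] at hi hj
    rcases Nat.lt_or_ge (i : ℕ) (j : ℕ) with hlt | hge
    · have : ((i : ℕ) + 1) * r ≤ (j : ℕ) * r := Nat.mul_le_mul_right r hlt
      omega
    · rcases Nat.lt_or_ge (j : ℕ) (i : ℕ) with hlt' | hge'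
      · have : ((j : ℕ) + 1) * r ≤ (i : ℕ) * r := Nat.mul_le_mul_right r hlt'
        omega
      · exact hij (Fin.ext (by omega))
  · rw [mem_lGroup_inr] at hi hj
    exact hij (hi ▸ hj ▸ rfl)

lemma exists_mem_lGroup (hr : 0 < r) (hkh : k + h = ℓ * r) (x : LIdx k h ℓ) :
    ∃ i : Fin ℓ, x ∈ lGroup k h r ℓ i := by
  rcases x with t | m
  · have ht : (t : ℕ) < ℓ * r := hkh ▸ t.2
    have hdiv : (t : ℕ) / r < ℓ := Nat.div_lt_iff_lt_mul hr |>.2 (by omega)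
    refine ⟨⟨(t : ℕ) / r, hdiv⟩, ?_⟩
    rw [mem_lGroup_inl]
    simp only [Fin.val_mk]
    have h1 := Nat.div_mul_le_self (t : ℕ) r
    have h2 := Nat.div_add_mod (t : ℕ) r
    have h3 := Nat.mod_lt (t : ℕ) hr
    have h4 : ((t : ℕ) / r + 1) * r = (t : ℕ) / r * r + r := by ring
    have h5 : (t : ℕ) / r * r = r * ((t : ℕ) / r) := Nat.mul_comm _ _
    omega
  · exact ⟨m, mem_lGroup_inr.2 rfl⟩

end Aux

section RhoAux
variable {k h ℓ : ℕ} {F : Type} [Field F] {C : Submodule F (LIdx k h ℓ → F)}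

lemma rho_top_mono {U V : Finset (LIdx k h ℓ)} (hUV : U ⊆ V)
    (hV : C.map (LinearMap.funLeft F F (Subtype.val : ↥V → LIdx k h ℓ)) = ⊤) :
    C.map (LinearMap.funLeft F F (Subtype.val : ↥U → LIdx k h ℓ)) = ⊤ := by
  have hval : (Subtype.val : ↥U → LIdx k h ℓ)
      = (Subtype.val : ↥V → LIdx k h ℓ) ∘ (fun x => ⟨x.1, hUV x.2⟩) := rfl
  have hinj : Function.Injective (fun x : ↥U => (⟨x.1, hUV x.2⟩ : ↥V)) := by
    intro x y hxy
    exact Subtype.ext (congrArg (Subtype.val : ↥V → LIdx k h ℓ) hxy)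
  rw [hval, LinearMap.funLeft_comp, Submodule.map_comp, hV, Submodule.map_top,
    LinearMap.range_eq_top]
  exact LinearMap.funLeft_surjective_of_injective _ _ _ hinj

lemma rho_eq_card_iff_top (U : Finset (LIdx k h ℓ)) :
    lRho k h ℓ F C U = U.card ↔
      C.map (LinearMap.funLeft F F (Subtype.val : ↥U → LIdx k h ℓ)) = ⊤ := by
  have hamb : Module.finrank F (↥U → F) = U.card := by
    rw [Module.finrank_fintype_fun_eq_card, Fintype.card_coe]
  constructor
  · intro hU
    exact Submodule.eq_top_of_finrank_eq (by rw [← hamb] at hU; exact hU)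
  · intro hU
    rw [lRho, hU, finrank_top, hamb]

end RhoAux


/-- for a `(k,r,h)` local maximally recoverable code, the columns of a generator
matrix indexed by `I` are linearly independent (`ρ(I) = |I|`) iff `|I| ≤ k` and
`|I ∩ S_i| ≤ r` for every local group `S_i`. -/
theorem stmt_4 (k h r ℓ : ℕ) (hr : 0 < r) (hkh : k + h = ℓ * r) (hk : 0 < k)
    (F : Type) [Field F] [Fintype F] [DecidableEq F]
    (C : Submodule F (LIdx k h ℓ → F))
    -- the first `k` coordinates are the message symbols
    (hsys : ∀ x : Fin k → F, ∃! c : LIdx k h ℓ → F,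
      c ∈ C ∧ ∀ j : Fin k, c (Sum.inl (Fin.castLE (Nat.le_add_right k h) j)) = x j)
    -- local parities with nonzero coefficients
    (a : Fin ℓ → Fin r → F) (ha : ∀ i j, a i j ≠ 0)
    (hloc : ∀ c ∈ C, ∀ i : Fin ℓ,
      c (Sum.inr i) = ∑ j : Fin r, a i j * c (Sum.inl (lCoord k h r ℓ hkh i j)))
    -- maximal recoverability: each admissible puncturing is a [k+h, k, h+1] MDS code
    (hmrc : ∀ E : Finset (LIdx k h ℓ), E.card = k + h →
      (∀ i : Fin ℓ, (E ∩ lGroup k h r ℓ i).card = r) →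
      Module.finrank F
          (C.map (LinearMap.funLeft F F (Subtype.val : ↥E → LIdx k h ℓ))) = k ∧
      ∀ y ∈ C.map (LinearMap.funLeft F F (Subtype.val : ↥E → LIdx k h ℓ)),
        y ≠ 0 → h + 1 ≤ hammingNorm y) :
    ∀ I : Finset (LIdx k h ℓ),
      lRho k h ℓ F C I = I.card ↔
        I.card ≤ k ∧ ∀ i : Fin ℓ, (I ∩ lGroup k h r ℓ i).card ≤ r := by
  classical
  -- the code has dimension `k`
  have hCfin : Module.finrank F C = k := by
    let φ : C →ₗ[F] (Fin k → F) :=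
      { toFun := fun c j => c.1 (Sum.inl (Fin.castLE (Nat.le_add_right k h) j)),
        map_add' := fun _ _ => rfl, map_smul' := fun _ _ => rfl }
    have hbij : Function.Bijective φ := by
      constructor
      · intro c c' hcc
        obtain ⟨d, hd, hu⟩ := hsys (φ c)
        have h1 : (c : LIdx k h ℓ → F) = d := hu c ⟨c.2, fun j => rfl⟩
        have h2 : (c' : LIdx k h ℓ → F) = d :=
          hu c' ⟨c'.2, fun j => (congrFun hcc j).symm⟩
        exact Subtype.ext (h1.trans h2.symm)
      · intro x
        obtain ⟨d, ⟨hd, hdx⟩, _⟩ := hsys x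
        exact ⟨⟨d, hd⟩, funext hdx⟩
    rw [(LinearEquiv.ofBijective φ hbij).finrank_eq,
      Module.finrank_fintype_fun_eq_card, Fintype.card_fin]
  intro I
  constructor
  · -- forward direction
    intro hI
    have htop := (rho_eq_card_iff_top I).1 hI
    constructor
    · calc I.card = lRho k h ℓ F C I := hI.symm
        _ ≤ Module.finrank F C := Submodule.finrank_map_le _ _
        _ = k := hCfin
    · intro i
      by_contra hcon
      push_neg at hcon
      have hsub : lGroup k h r ℓ i ⊆ I := by
        have heq : I ∩ lGroup k h r ℓ i = lGroup k h r ℓ i :=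
          Finset.eq_of_subset_of_card_le Finset.inter_subset_right
            (by rw [card_lGroup hkh]; omega)
        rw [← heq]
        exact Finset.inter_subset_left
      have htopS := rho_top_mono hsub htop
      set y : ↥(lGroup k h r ℓ i) → F :=
        fun x => if (x : LIdx k h ℓ) = Sum.inr i then 1 else 0 with hy
      have hymem : y ∈ C.map
          (LinearMap.funLeft F F (Subtype.val : ↥(lGroup k h r ℓ i) → LIdx k h ℓ)) := by
        rw [htopS]; trivial
      obtain ⟨c, hc, hcy⟩ := hymem
      have hinri : Sum.inr i ∈ lGroup k h r ℓ i := mem_lGroup_inr.2 rfl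
      have h0 : c (Sum.inr i) = 1 := by
        have := congrFun hcy ⟨Sum.inr i, hinri⟩
        simpa [hy] using this
      have h1 : ∀ j : Fin r, c (Sum.inl (lCoord k h r ℓ hkh i j)) = 0 := by
        intro j
        have := congrFun hcy ⟨Sum.inl (lCoord k h r ℓ hkh i j), lCoord_mem hkh i j⟩
        simpa [hy] using this
      rw [hloc c hc i] at h0
      simp only [h1, mul_zero, Finset.sum_const_zero] at h0
      exact one_ne_zero h0.symm
  · -- backward direction
    rintro ⟨hIk, hIS⟩
    have hEi : ∀ i : Fin ℓ, ∃ Ei : Finset (LIdx k h ℓ),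
        I ∩ lGroup k h r ℓ i ⊆ Ei ∧ Ei ⊆ lGroup k h r ℓ i ∧ Ei.card = r :=
      fun i => Finset.exists_subsuperset_card_eq Finset.inter_subset_right (hIS i)
        (by rw [card_lGroup hkh]; omega)
    choose Ef hE1 hE2 hE3 using hEi
    set E : Finset (LIdx k h ℓ) := Finset.univ.biUnion Ef with hEdef
    have hES : ∀ i, E ∩ lGroup k h r ℓ i = Ef i := by
      intro i
      apply Finset.Subset.antisymm
      · intro x hx
        obtain ⟨hxE, hxS⟩ := Finset.mem_inter.1 hx
        obtain ⟨j, _, hj⟩ := Finset.mem_biUnion.1 hxE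
        by_cases hji : j = i
        · exact hji ▸ hj
        · exact absurd hxS (Finset.disjoint_left.1 (lGroup_disjoint hji) (hE2 j hj))
      · intro x hx
        exact Finset.mem_inter.2 ⟨Finset.mem_biUnion.2 ⟨i, Finset.mem_univ _, hx⟩, hE2 i hx⟩
    have hEcard : E.card = k + h := by
      rw [hEdef, Finset.card_biUnion
        (fun i _ j _ hij => (lGroup_disjoint hij).mono (hE2 i) (hE2 j))]
      simp only [hE3, Finset.sum_const, Finset.card_univ, Fintype.card_fin, smul_eq_mul]
      omega
    have hIE : I ⊆ E := by
      intro x hx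
      obtain ⟨i, hxi⟩ := exists_mem_lGroup hr hkh x
      exact Finset.mem_biUnion.2 ⟨i, Finset.mem_univ _,
        hE1 i (Finset.mem_inter.2 ⟨hx, hxi⟩)⟩
    obtain ⟨hrankE, hdist⟩ := hmrc E hEcard (fun i => by rw [hES]; exact hE3 i)
    obtain ⟨J, hIJ, hJE, hJcard⟩ :=
      Finset.exists_subsuperset_card_eq hIE hIk (by omega)
    -- projection onto `J` is surjective
    have hJtop : C.map (LinearMap.funLeft F F (Subtype.val : ↥J → LIdx k h ℓ)) = ⊤ := by
      set ι : ↥J → ↥E := fun x => ⟨x.1, hJE x.2⟩ with hι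
      have hval : (Subtype.val : ↥J → LIdx k h ℓ) = (Subtype.val : ↥E → LIdx k h ℓ) ∘ ι := rfl
      set pE := C.map (LinearMap.funLeft F F (Subtype.val : ↥E → LIdx k h ℓ)) with hpE
      set f : pE →ₗ[F] (↥J → F) := (LinearMap.funLeft F F ι).comp pE.subtype with hf
      have hfinj : Function.Injective f := by
        rw [← LinearMap.ker_eq_bot, Submodule.eq_bot_iff]
        rintro ⟨y, hy⟩ hker
        rw [LinearMap.mem_ker] at hker
        have hyJ : ∀ x : ↥E, (x : LIdx k h ℓ) ∈ J → y x = 0 := by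
          intro x hxJ
          have := congrFun hker ⟨(x : LIdx k h ℓ), hxJ⟩
          simpa [hf, hι] using this
        by_cases hy0 : y = 0
        · simpa using hy0
        · exfalso
          have hnorm : hammingNorm y ≤ h := by
            have hsupp : (Finset.univ.filter fun x : ↥E => y x ≠ 0) ⊆
                Finset.univ.filter fun x : ↥E => (x : LIdx k h ℓ) ∉ J := by
              intro x hx
              simp only [Finset.mem_filter, Finset.mem_univ, true_and] at hx ⊢
              intro hxJ
              exact hx (hyJ x hxJ)
            have himg : (Finset.univ.filter fun x : ↥E =>
                (x : LIdx k h ℓ) ∉ J).image Subtype.val ⊆ E \ J := by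
              intro z hz
              simp only [Finset.mem_image, Finset.mem_filter] at hz
              obtain ⟨x, ⟨_, hxJ⟩, rfl⟩ := hz
              exact Finset.mem_sdiff.2 ⟨x.2, hxJ⟩
            calc hammingNorm y
                ≤ (Finset.univ.filter fun x : ↥E =>
                    (x : LIdx k h ℓ) ∉ J).card := Finset.card_le_card hsupp
              _ = ((Finset.univ.filter fun x : ↥E =>
                    (x : LIdx k h ℓ) ∉ J).image Subtype.val).card :=
                  (Finset.card_image_of_injective _ Subtype.val_injective).symm
              _ ≤ (E \ J).card := Finset.card_le_card himg
              _ = E.card - J.card := Finset.card_sdiff_of_subset hJE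
              _ = h := by omega
          have := hdist y hy hy0
          omega
      have hrange : LinearMap.range f
          = C.map (LinearMap.funLeft F F (Subtype.val : ↥J → LIdx k h ℓ)) := by
        rw [hf, LinearMap.range_comp, Submodule.range_subtype, hpE,
          ← Submodule.map_comp, ← LinearMap.funLeft_comp, ← hval]
      apply Submodule.eq_top_of_finrank_eq
      rw [← hrange, LinearMap.finrank_range_of_inj hfinj, hpE,
        Module.finrank_fintype_fun_eq_card, Fintype.card_coe, hJcard]
      exact hrankE
    exact (rho_eq_card_iff_top I).2 (rho_top_mono hIJ hJtop)
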